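/- Let X ⊆ 2^ω be null-additive and let T be a tree with μ(Lim T) > 0. Then there is a tree T* with μ(Lim T*) > 0, with μ(Lim(T*^{[η]})) > 0 for every η ∈ T*, such that ((2^ω \ (Lim T)^{fin}) + X) ∩ Lim T* = ∅, and moreover X = ⋃ Y_{η,ζ} where the union is over η ∈ T* and ζ with length ζ = length η, and Y_{η,ζ} = {x ∈ X : ζ⌢x^{⟨length ζ⟩} + T*^{[η]} ⊆ T} (here x^{⟨k⟩} is the shift of x by k and addition of finite with infinite sequences is truncated componentwise mod 2). -/

import Mathlib

open MeasureTheory Pointwise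

/-- Cantor space `2^ω` with componentwise addition mod 2. -/
abbrev Cantor : Type := ℕ → ZMod 2
/-- Finite binary sequences, the nodes of `2^{<ω}`. -/
abbrev FinSeq : Type := List (ZMod 2)

instance : TopologicalSpace (ZMod 2) := ⊥
instance : DiscreteTopology (ZMod 2) := ⟨rfl⟩
noncomputable instance : MeasurableSpace Cantor := borel Cantor
instance : BorelSpace Cantor := ⟨rfl⟩

/-- The uniform (Lebesgue) product measure on `2^ω`, realized as the Haar measure of the
compact group `2^ω` normalized so that the whole space has measure 1. -/
noncomputable def μC : Measure Cantor := Measure.addHaarMeasure ⊤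

/-- `X` is null-additive: `X + A` is null for every null `A`. -/
def NullAdditive (X : Set Cantor) : Prop := ∀ A : Set Cantor, μC A = 0 → μC (X + A) = 0

/-- `X` is meager-additive: `X + A` is meager for every meager `A`. -/
def MeagerAdditive (X : Set Cantor) : Prop := ∀ A : Set Cantor, IsMeagre A → IsMeagre (X + A)

/-- A tree on `2^{<ω}`: nonempty, closed under initial segments, and every node has
extensions in the tree of every greater length. -/
def IsTree (T : Set FinSeq) : Prop :=
  T.Nonempty ∧ (∀ σ τ : FinSeq, σ <+: τ → τ ∈ T → σ ∈ T) ∧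
    ∀ σ ∈ T, ∀ n, σ.length < n → ∃ τ ∈ T, σ <+: τ ∧ τ.length = n

/-- Restriction `x↾n` of `x ∈ 2^ω`. -/
def res (x : Cantor) (n : ℕ) : FinSeq := (List.range n).map x

/-- `Lim T = {x ∈ 2^ω : ∀ n, x↾n ∈ T}`. -/
def LimT (T : Set FinSeq) : Set Cantor := {x | ∀ n, res x n ∈ T}

/-- A nowhere dense tree: every node has an extension outside the tree. -/
def NwdTree (T : Set FinSeq) : Prop := ∀ η ∈ T, ∃ τ : FinSeq, η <+: τ ∧ τ ∉ T

/-- Componentwise mod-2 addition of finite sequences (of the same length). -/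
def finAdd : FinSeq → FinSeq → FinSeq := List.zipWith (· + ·)

/-- `T + S = {η + σ : η ∈ T, σ ∈ S, same length}`. -/
def treeSum (T S : Set FinSeq) : Set FinSeq :=
  {ρ | ∃ η ∈ T, ∃ σ ∈ S, η.length = σ.length ∧ ρ = finAdd η σ}

/-- `T^{[η]} = {τ ∈ T : τ ⊑ η or η ⊑ τ}`. -/
def through (T : Set FinSeq) (η : FinSeq) : Set FinSeq := {τ ∈ T | τ <+: η ∨ η <+: τ}

/-- `A^{fin}`: points agreeing with some point of `A` at all but finitely many coordinates. -/
def finEq (A : Set Cantor) : Set Cantor := {y | ∃ x ∈ A, ∀ᶠ n in Filter.atTop, y n = x n}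

/-- `U^{⟨ν⟩} = {τ : ν⌢τ ∈ U}`. -/
def above (U : Set FinSeq) (ν : FinSeq) : Set FinSeq := {τ | ν ++ τ ∈ U}

/-- A corset: a nondecreasing function `ω → ω \ {0}` tending to infinity. -/
def Corset (f : ℕ → ℕ) : Prop :=
  Monotone f ∧ (∀ n, 0 < f n) ∧ Filter.Tendsto f Filter.atTop Filter.atTop

/-- `S` is of width `f`: `|S ∩ 2^n| ≤ f n` for all `n`. -/
def widthLe (S : Set FinSeq) (f : ℕ → ℕ) : Prop := ∀ n, {τ ∈ S | τ.length = n}.ncard ≤ f n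

/-- `S` is almost of width `f`: `|S ∩ 2^n| ≤ f n` for all sufficiently large `n`. -/
def almostWidthLe (S : Set FinSeq) (f : ℕ → ℕ) : Prop :=
  ∀ᶠ n in Filter.atTop, {τ ∈ S | τ.length = n}.ncard ≤ f n

/-- The infinite sequence `ζ⌢x^{⟨length ζ⟩}`: `ζ` followed by the tail of `x`
shifted by `length ζ`, i.e. `i ↦ ζ i` for `i < length ζ` and `i ↦ x i` otherwise. -/
def catShift (ζ : FinSeq) (x : Cantor) : Cantor :=
  fun i => if h : i < ζ.length then ζ.get ⟨i, h⟩ else x i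

instance : μC.IsAddLeftInvariant := by unfold μC; infer_instance
instance : μC.Regular := by unfold μC; infer_instance
instance : IsProbabilityMeasure μC := by
  constructor
  have := Measure.addHaarMeasure_self (K₀ := (⊤ : TopologicalSpace.PositiveCompacts Cantor))
  simpa [μC] using this

namespace Stmt5Aux
open ENNReal

lemma res_length (x : Cantor) (n : ℕ) : (res x n).length = n := by
  simp [res]

lemma res_getElem (x : Cantor) (n i : ℕ) (h : i < (res x n).length) :
    (res x n)[i] = x i := by
  simp [res]

lemma res_eq_res {x y : Cantor} {n : ℕ} (h : ∀ i < n, x i = y i) :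
    res x n = res y n := by
  apply List.ext_getElem (by simp [res_length])
  intro i h1 h2
  rw [res_getElem, res_getElem]
  exact h i (by simpa [res_length] using h1)

lemma eq_of_res_eq {x y : Cantor} {n : ℕ} (h : res x n = res y n) :
    ∀ i < n, x i = y i := by
  intro i hi
  have := congrArg (fun l => l.getD i 0) h
  simpa [res, List.getD_eq_getElem?_getD, List.getElem?_map, List.getElem?_range, hi] using this

lemma res_take (x : Cantor) {m n : ℕ} (h : m ≤ n) : (res x n).take m = res x m := by
  apply List.ext_getElem (by simp [res_length, h])
  intro i h1 h2
  simp only [List.getElem_take, res_getElem]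

lemma res_prefix (x : Cantor) {m n : ℕ} (h : m ≤ n) : res x m <+: res x n := by
  rw [← res_take x h]; exact List.take_prefix _ _

lemma prefix_res {σ : FinSeq} {x : Cantor} {n : ℕ} (h : σ <+: res x n) :
    res x σ.length = σ := by
  have hl : σ.length ≤ n := by
    have := h.length_le; simpa [res_length] using this
  have := List.prefix_iff_eq_take.mp h
  rw [this, res_take x hl, res_length]

lemma res_add (x y : Cantor) (n : ℕ) : res (x + y) n = finAdd (res x n) (res y n) := by
  apply List.ext_getElem (by simp [finAdd, res_length])
  intro i h1 h2
  simp [finAdd, res, Pi.add_apply]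

/-- cylinder -/
def cyl (σ : FinSeq) : Set Cantor := {x | res x σ.length = σ}

lemma mem_cyl {σ : FinSeq} {x : Cantor} : x ∈ cyl σ ↔ res x σ.length = σ := Iff.rfl

lemma mem_cyl_res {x : Cantor} (n : ℕ) : x ∈ cyl (res x n) := by
  simp [cyl, res_length]

lemma mem_cyl_res_iff {x y : Cantor} {n : ℕ} : x ∈ cyl (res y n) ↔ res x n = res y n := by
  rw [mem_cyl, res_length]

lemma mem_cyl_iff_forall {σ : FinSeq} {x : Cantor} :
    x ∈ cyl σ ↔ ∀ i : ℕ, ∀ h : i < σ.length, x i = σ[i] := by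
  constructor
  · intro hx i h
    have := congrArg (fun l => l.getD i 0) hx
    simpa [res, List.getD_eq_getElem?_getD, List.getElem?_map, List.getElem?_range, h,
      List.getElem?_eq_getElem h] using this
  · intro h
    apply List.ext_getElem (by simp [res_length])
    intro i h1 h2
    rw [res_getElem]
    exact h i h2

lemma isOpen_cyl (σ : FinSeq) : IsOpen (cyl σ) := by
  have : cyl σ = ⋂ i ∈ Finset.range σ.length, {x : Cantor | x i = σ.getD i 0} := by
    ext x
    simp only [Set.mem_iInter, Finset.mem_range, Set.mem_setOf_eq, mem_cyl_iff_forall]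
    constructor
    · intro h i hi; rw [List.getD_eq_getElem σ 0 hi]; exact h i hi
    · intro h i hi; rw [← List.getD_eq_getElem σ 0 hi]; exact h i hi
  rw [this]
  apply isOpen_biInter_finset
  intro i _
  have hc : Continuous (fun x : Cantor => x i) := continuous_apply i
  have : {x : Cantor | x i = σ.getD i 0} = (fun x : Cantor => x i) ⁻¹' {σ.getD i 0} := rfl
  rw [this]
  exact hc.isOpen_preimage _ (isOpen_discrete _)

/-- sets determined by first n coordinates are clopen -/
def DetBy (S : Set Cantor) (n : ℕ) : Prop :=
  ∀ u v : Cantor, res u n = res v n → u ∈ S → v ∈ S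

lemma DetBy.isOpen {S : Set Cantor} {n : ℕ} (h : DetBy S n) : IsOpen S := by
  have : S = ⋃ u ∈ S, cyl (res u n) := by
    ext v
    constructor
    · intro hv; exact Set.mem_biUnion hv (mem_cyl_res n)
    · intro hv
      obtain ⟨u, hu, hv⟩ := Set.mem_iUnion₂.mp hv
      exact h u v (mem_cyl_res_iff.mp hv).symm hu
  rw [this]
  exact isOpen_biUnion (fun u _ => isOpen_cyl _)

lemma DetBy.compl {S : Set Cantor} {n : ℕ} (h : DetBy S n) : DetBy Sᶜ n := by
  intro u v huv hu hv
  exact hu (h v u huv.symm hv)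

lemma DetBy.isClopen {S : Set Cantor} {n : ℕ} (h : DetBy S n) : IsClopen S :=
  ⟨⟨h.compl.isOpen⟩, h.isOpen⟩

lemma DetBy.measurableSet {S : Set Cantor} {n : ℕ} (h : DetBy S n) : MeasurableSet S :=
  h.isOpen.measurableSet

lemma measurableSet_cyl (σ : FinSeq) : MeasurableSet (cyl σ) :=
  (isOpen_cyl σ).measurableSet

lemma measurableSet_LimT (T : Set FinSeq) : MeasurableSet (LimT T) := by
  have : LimT T = ⋂ n, {x : Cantor | res x n ∈ T} := by
    ext x; simp [LimT]
  rw [this]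
  apply MeasurableSet.iInter
  intro n
  apply DetBy.measurableSet (n := n)
  intro u v huv hu
  simpa [Set.mem_setOf_eq, ← huv] using hu

lemma isClosed_LimT (T : Set FinSeq) : IsClosed (LimT T) := by
  have : LimT T = ⋂ n, {x : Cantor | res x n ∈ T} := by
    ext x; simp [LimT]
  rw [this]
  apply isClosed_iInter
  intro n
  have hdet : DetBy {x : Cantor | res x n ∈ T} n := by
    intro u v huv hu; simpa [Set.mem_setOf_eq, ← huv] using hu
  exact hdet.isClopen.1

/-- basis lemma -/
lemma exists_cyl_subset {U : Set Cantor} (hU : IsOpen U) {y : Cantor} (hy : y ∈ U) :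
    ∃ n, cyl (res y n) ⊆ U := by
  obtain ⟨I, u, hu, hsub⟩ := isOpen_pi_iff.mp hU y hy
  refine ⟨(I.sup id) + 1, ?_⟩
  intro z hz
  apply hsub
  intro i hi
  have hile : i ≤ I.sup id := Finset.le_sup (f := id) hi
  have : z i = y i := by
    exact eq_of_res_eq (mem_cyl_res_iff.mp hz) i (Nat.lt_succ_of_le hile)
  rw [this]
  exact (hu i hi).2

lemma z2 (a : ZMod 2) : a + a = 0 := by fin_cases a <;> decide

lemma cyl_nil : cyl ([] : FinSeq) = Set.univ := by
  ext x; simp [cyl, res]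

lemma measure_vadd (v : Cantor) (A : Set Cantor) : μC {x | v + x ∈ A} = μC A :=
  measure_preimage_add μC v A

lemma measure_cyl (σ : FinSeq) : (2 : ℝ≥0∞) ^ σ.length * μC (cyl σ) = 1 := by
  set n := σ.length with hn
  set A : (Fin n → ZMod 2) → Set Cantor := fun s => cyl (List.ofFn s) with hA
  have hlen : ∀ s : Fin n → ZMod 2, (List.ofFn s).length = n := fun s => List.length_ofFn
  have hmemA : ∀ (s : Fin n → ZMod 2) (x : Cantor),
      x ∈ A s ↔ ∀ i : Fin n, x i = s i := by
    intro s x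
    rw [hA, mem_cyl_iff_forall]
    constructor
    · intro h i
      have := h i (by rw [hlen]; exact i.2)
      simpa using this
    · intro h i hi
      have := h ⟨i, by rwa [hlen] at hi⟩
      simpa using this
  have hcover : Set.univ = ⋃ s, A s := by
    ext x
    simp only [Set.mem_univ, true_iff, Set.mem_iUnion]
    exact ⟨fun i => x i, (hmemA _ x).mpr (fun i => rfl)⟩
  have hdisj : Pairwise (Function.onFun Disjoint A) := by
    intro s t hst
    rw [Function.onFun, Set.disjoint_left]
    intro x hxs hxt
    apply hst
    funext i
    rw [← (hmemA s x).mp hxs i, ← (hmemA t x).mp hxt i]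
  have hmeas : ∀ s, MeasurableSet (A s) := fun s => measurableSet_cyl _
  have hμeq : ∀ s : Fin n → ZMod 2, μC (A s) = μC (cyl σ) := by
    intro s
    set v : Cantor := fun i => if h : i < n then σ.get ⟨i, h⟩ + s ⟨i, h⟩ else 0 with hv
    have key : ∀ (a b c : ZMod 2), a + b + c = b ↔ c = a := by decide
    have : cyl σ = {x | v + x ∈ A s} := by
      ext x
      rw [Set.mem_setOf_eq, hmemA, mem_cyl_iff_forall]
      constructor
      · intro h i
        have hi : (i : ℕ) < n := i.2
        have hx := h i (by rw [← hn]; exact hi)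
        show v i + x i = s i
        rw [hv]
        simp only [hi, dif_pos]
        rw [(key (σ.get ⟨i, hi⟩) (s ⟨i, hi⟩) (x i)).mpr (by simpa using hx)]
      · intro h i hi
        have hi' : i < n := by rwa [← hn] at hi
        have hvx : v i + x i = s ⟨i, hi'⟩ := h ⟨i, hi'⟩
        rw [hv] at hvx
        simp only [hi', dif_pos] at hvx
        have := (key (σ.get ⟨i, hi'⟩) (s ⟨i, hi'⟩) (x i)).mp hvx
        simpa using this
    rw [this, measure_vadd]
  have h1 : (1 : ℝ≥0∞) = μC Set.univ := (measure_univ).symm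
  rw [h1, hcover, measure_iUnion hdisj hmeas]
  rw [tsum_fintype]
  simp_rw [hμeq]
  rw [Finset.sum_const, Finset.card_univ]
  rw [nsmul_eq_mul]
  congr 1
  rw [Fintype.card_fun]
  simp [hn]

lemma take_of_mem_two_cyls {σ σ' : FinSeq} {x : Cantor} (hx : x ∈ cyl σ) (hx' : x ∈ cyl σ')
    (hl : σ.length ≤ σ'.length) : σ'.take σ.length = σ := by
  rw [mem_cyl] at hx hx'
  rw [← hx', res_take x hl, hx]

lemma open_decomp {U : Set Cantor} (hU : IsOpen U) :
    ∃ D : Set FinSeq, (U = ⋃ σ ∈ D, cyl σ) ∧ D.PairwiseDisjoint cyl := by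
  classical
  refine ⟨{σ | cyl σ ⊆ U ∧ ∀ m < σ.length, ¬ cyl (σ.take m) ⊆ U}, ?_, ?_⟩
  · apply Set.eq_of_subset_of_subset
    · intro y hy
      have hex : ∃ n, cyl (res y n) ⊆ U := exists_cyl_subset hU hy
      set n := Nat.find hex with hnn
      refine Set.mem_biUnion ?_ (mem_cyl_res (x := y) n)
      refine ⟨Nat.find_spec hex, ?_⟩
      intro m hm hsub
      rw [res_length] at hm
      rw [res_take y (le_of_lt hm)] at hsub
      exact Nat.find_min hex hm hsub
    · intro y hy
      obtain ⟨σ, hσ, hyσ⟩ := Set.mem_iUnion₂.mp hy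
      exact hσ.1 hyσ
  · intro σ hσ σ' hσ' hne
    rw [Function.onFun, Set.disjoint_left]
    intro x hx hx'
    rcases le_or_gt σ.length σ'.length with hl | hl
    · rcases eq_or_lt_of_le hl with heq | hlt
      · apply hne
        apply List.ext_getElem heq
        intro i h1 h2
        rw [← mem_cyl_iff_forall.mp hx i h1, ← mem_cyl_iff_forall.mp hx' i h2]
      · exact hσ'.2 σ.length hlt (by rw [take_of_mem_two_cyls hx hx' hl]; exact hσ.1)
    · exact hσ.2 σ'.length hl (by rw [take_of_mem_two_cyls hx' hx (le_of_lt hl)]; exact hσ'.1)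

lemma density {E : Set Cantor} (hEm : MeasurableSet E) (hpos : 0 < μC E) {c : ℝ≥0∞}
    (hc : c < 1) : ∃ σ : FinSeq, c * μC (cyl σ) < μC (E ∩ cyl σ) := by
  by_contra hcon
  push_neg at hcon
  rcases eq_or_ne c 0 with rfl | hc0
  · have := hcon []
    simp only [zero_mul, nonpos_iff_eq_zero, cyl_nil, Set.inter_univ] at this
    rw [this] at hpos
    exact lt_irrefl _ hpos
  have hEtop : μC E ≠ ⊤ := measure_ne_top _ _
  have hlt : μC E < μC E / c := by
    rw [ENNReal.lt_div_iff_mul_lt (Or.inl hc0) (Or.inl (by exact ne_top_of_lt hc))]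
    calc μC E * c < μC E * 1 := by
          exact ENNReal.mul_lt_mul_right (ne_of_gt hpos) hEtop hc
      _ = μC E := mul_one _
  obtain ⟨U, hEU, hUopen, hUlt⟩ := Set.exists_isOpen_lt_of_lt E _ hlt
  obtain ⟨D, hUD, hDdisj⟩ := open_decomp hUopen
  have hDc : D.Countable := Set.to_countable D
  have hmuU : μC U = ∑' σ : D, μC (cyl σ) := by
    rw [hUD]
    exact measure_biUnion hDc hDdisj (fun σ _ => measurableSet_cyl σ)
  have hE_eq : μC E = ∑' σ : D, μC (E ∩ cyl σ) := by
    have h1 : E = ⋃ σ ∈ D, (E ∩ cyl σ) := by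
      rw [← Set.inter_iUnion₂, ← hUD]
      exact (Set.inter_eq_left.mpr hEU).symm
    conv_lhs => rw [h1]
    apply measure_biUnion hDc
    · exact fun σ hσ σ' hσ' hne =>
        Set.disjoint_of_subset (Set.inter_subset_right) (Set.inter_subset_right)
          (hDdisj hσ hσ' hne)
    · exact fun σ _ => hEm.inter (measurableSet_cyl σ)
  have hle : μC E ≤ c * μC U := by
    rw [hE_eq, hmuU, ← ENNReal.tsum_mul_left]
    exact ENNReal.tsum_le_tsum (fun σ => hcon σ)
  have : μC E < μC E := by
    calc μC E ≤ c * μC U := hle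
      _ < c * (μC E / c) := by
          exact ENNReal.mul_lt_mul_right hc0 (ne_top_of_lt hc) hUlt
      _ = μC E := ENNReal.mul_div_cancel hc0 (ne_top_of_lt hc)
  exact lt_irrefl _ this

lemma catShift_lt {ζ : FinSeq} {x : Cantor} {i : ℕ} (h : i < ζ.length) :
    catShift ζ x i = ζ.get ⟨i, h⟩ := dif_pos h

lemma catShift_ge {ζ : FinSeq} {x : Cantor} {i : ℕ} (h : ζ.length ≤ i) :
    catShift ζ x i = x i := dif_neg (not_lt.mpr h)

lemma catShift_mem_cyl (ζ : FinSeq) (x : Cantor) : catShift ζ x ∈ cyl ζ := by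
  rw [mem_cyl_iff_forall]
  intro i h
  rw [catShift_lt h]
  rfl

lemma mem_finEq_iff {E : Set Cantor} {u : Cantor} :
    u ∈ finEq E ↔ ∃ σ : FinSeq, catShift σ u ∈ E := by
  constructor
  · rintro ⟨z, hz, hev⟩
    obtain ⟨n₀, hn₀⟩ := Filter.eventually_atTop.mp hev
    refine ⟨res z n₀, ?_⟩
    have : catShift (res z n₀) u = z := by
      funext i
      rcases lt_or_ge i n₀ with hi | hi
      · rw [catShift_lt (by rw [res_length]; exact hi)]
        show (res z n₀)[i]'_ = z i
        rw [res_getElem]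
      · rw [catShift_ge (by rw [res_length]; exact hi)]
        exact hn₀ i hi
    rwa [this]
  · rintro ⟨σ, hσ⟩
    refine ⟨catShift σ u, hσ, ?_⟩
    rw [Filter.eventually_atTop]
    exact ⟨σ.length, fun i hi => (catShift_ge hi).symm⟩

lemma measurableSet_catPre (T : Set FinSeq) (σ : FinSeq) :
    MeasurableSet {u : Cantor | catShift σ u ∈ LimT T} := by
  have : {u : Cantor | catShift σ u ∈ LimT T} = ⋂ k, {u : Cantor | res (catShift σ u) k ∈ T} := by
    ext u; simp [LimT]
  rw [this]
  apply MeasurableSet.iInter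
  intro k
  apply DetBy.measurableSet (n := k)
  intro u v huv hu
  have : res (catShift σ v) k = res (catShift σ u) k := by
    apply res_eq_res
    intro i hi
    rcases lt_or_ge i σ.length with h | h
    · rw [catShift_lt h, catShift_lt h]
    · rw [catShift_ge h, catShift_ge h]
      exact (eq_of_res_eq huv i hi).symm
  rw [Set.mem_setOf_eq, this]
  exact hu

lemma measurableSet_finEq_LimT (T : Set FinSeq) : MeasurableSet (finEq (LimT T)) := by
  have : finEq (LimT T) = ⋃ σ : FinSeq, {u : Cantor | catShift σ u ∈ LimT T} := by
    ext u
    rw [Set.mem_iUnion]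
    exact mem_finEq_iff
  rw [this]
  exact MeasurableSet.iUnion (fun σ => measurableSet_catPre T σ)

lemma measure_finEq_LimT (T : Set FinSeq) (hpos : 0 < μC (LimT T)) :
    μC (finEq (LimT T)) = 1 := by
  set E := LimT T with hE
  have hEm : MeasurableSet E := measurableSet_LimT T
  refine le_antisymm prob_le_one (le_of_forall_lt ?_)
  intro c hc
  obtain ⟨σ, hσ⟩ := density hEm hpos hc
  set n := σ.length with hn
  set Cset : Set Cantor := {u | catShift σ u ∈ E} with hCset
  -- Cset = ⋃ over patterns s of translates of E ∩ cyl σ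
  set v : (Fin n → ZMod 2) → Cantor :=
    fun s i => if h : i < n then σ.get ⟨i, h⟩ + s ⟨i, h⟩ else 0 with hv
  set B : (Fin n → ZMod 2) → Set Cantor := fun s => {u | v s + u ∈ E ∩ cyl σ} with hB
  have key : ∀ (a b c : ZMod 2), a + b + c = b ↔ c = a := by decide
  have hmatch : ∀ (s : Fin n → ZMod 2) (u : Cantor),
      v s + u ∈ cyl σ ↔ ∀ i : Fin n, u i = s i := by
    intro s u
    rw [mem_cyl_iff_forall]
    constructor
    · intro h i
      have hi : (i : ℕ) < n := i.2
      have := h i (by rw [← hn]; exact hi)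
      have hvs : v s i + u i = σ.get ⟨i, hi⟩ := this
      rw [hv] at hvs
      simp only [hi, dif_pos] at hvs
      have key2 : ∀ (a b c : ZMod 2), a + b + c = a ↔ c = b := by decide
      have := (key2 (σ.get ⟨(i:ℕ), hi⟩) (s ⟨(i:ℕ), hi⟩) (u i)).mp hvs
      simpa using this
    · intro h i hi
      have hi' : i < n := by rwa [← hn] at hi
      show v s i + u i = σ[i]
      rw [hv]
      simp only [hi', dif_pos]
      rw [show u i = s ⟨i, hi'⟩ from by simpa using h ⟨i, hi'⟩]
      rw [add_assoc, z2, add_zero]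
      rfl
  have hshift : ∀ (s : Fin n → ZMod 2) (u : Cantor),
      (∀ i : Fin n, u i = s i) → v s + u = catShift σ u := by
    intro s u h
    funext i
    rcases lt_or_ge i n with hi | hi
    · rw [catShift_lt (hn ▸ hi)]
      show v s i + u i = _
      rw [hv]
      simp only [hi, dif_pos]
      rw [show u i = s ⟨i, hi⟩ from by simpa using h ⟨i, hi⟩]
      rw [add_assoc, z2, add_zero]
    · rw [catShift_ge (hn ▸ hi)]
      show v s i + u i = u i
      rw [hv]
      simp only [not_lt.mpr hi, dif_neg, zero_add]
      simp [hi]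
  have hCU : Cset = ⋃ s, B s := by
    ext u
    constructor
    · intro hu
      rw [Set.mem_iUnion]
      refine ⟨fun i => u i, ?_⟩
      rw [hB]
      have hpat : ∀ i : Fin n, u i = (fun i : Fin n => u i) i := fun i => rfl
      have := hshift _ u hpat
      rw [Set.mem_setOf_eq, this]
      exact ⟨hu, catShift_mem_cyl σ u⟩
    · intro hu
      rw [Set.mem_iUnion] at hu
      obtain ⟨s, hs⟩ := hu
      rw [hB, Set.mem_setOf_eq] at hs
      have hpat := (hmatch s u).mp hs.2
      have := hshift s u hpat
      rw [this] at hs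
      exact hs.1
  have hBdisj : Pairwise (Function.onFun Disjoint B) := by
    intro s t hst
    rw [Function.onFun, Set.disjoint_left]
    intro u hus hut
    apply hst
    funext i
    rw [← (hmatch s u).mp hus.2 i, ← (hmatch t u).mp hut.2 i]
  have hBmeas : ∀ s, MeasurableSet (B s) := by
    intro s
    have : B s = (fun u => v s + u) ⁻¹' (E ∩ cyl σ) := rfl
    rw [this]
    exact (measurable_const_add (v s)) (hEm.inter (measurableSet_cyl σ))
  have hBval : ∀ s, μC (B s) = μC (E ∩ cyl σ) := fun s => measure_vadd (v s) _
  have hCval : μC Cset = (2:ℝ≥0∞)^n * μC (E ∩ cyl σ) := by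
    rw [hCU, measure_iUnion hBdisj hBmeas, tsum_fintype]
    simp_rw [hBval]
    rw [Finset.sum_const, Finset.card_univ, nsmul_eq_mul]
    congr 1
    rw [Fintype.card_fun]
    simp
  have hsub : Cset ⊆ finEq E := fun u hu => mem_finEq_iff.mpr ⟨σ, hu⟩
  calc c = c * 1 := (mul_one c).symm
    _ = c * ((2:ℝ≥0∞)^n * μC (cyl σ)) := by rw [measure_cyl σ]
    _ = (2:ℝ≥0∞)^n * (c * μC (cyl σ)) := by ring
    _ < (2:ℝ≥0∞)^n * μC (E ∩ cyl σ) := by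
        apply ENNReal.mul_lt_mul_right (by positivity) (by simp) hσ
    _ = μC Cset := hCval.symm
    _ ≤ μC (finEq E) := measure_mono hsub

lemma cyl_mono {σ τ : FinSeq} (h : σ <+: τ) : cyl τ ⊆ cyl σ := by
  intro x hx
  rw [mem_cyl] at hx ⊢
  have hl : σ.length ≤ τ.length := h.length_le
  rw [← res_take x hl, hx]
  exact (List.prefix_iff_eq_take.mp h).symm

lemma mem_of_closed {C : Set Cantor} (hC : IsClosed C) {y : Cantor}
    (h : ∀ n, ∃ z ∈ C, res z n = res y n) : y ∈ C := by
  by_contra hy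
  obtain ⟨n, hn⟩ := exists_cyl_subset hC.isOpen_compl hy
  obtain ⟨z, hz, hzy⟩ := h n
  exact (hn (mem_cyl_res_iff.mpr hzy)) hz

/-- the tree of positive-measure nodes of K -/
def TstarK (K : Set Cantor) : Set FinSeq := {σ | 0 < μC (K ∩ cyl σ)}

variable {K : Set Cantor}

lemma TstarK_prefix {σ τ : FinSeq} (h : σ <+: τ) (hτ : τ ∈ TstarK K) : σ ∈ TstarK K :=
  lt_of_lt_of_le hτ (measure_mono (Set.inter_subset_inter_right K (cyl_mono h)))

lemma TstarK_nil (hK : 0 < μC K) : ([] : FinSeq) ∈ TstarK K := by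
  show 0 < μC (K ∩ cyl [])
  rwa [cyl_nil, Set.inter_univ]

lemma TstarK_ext {σ : FinSeq} (hσ : σ ∈ TstarK K) {n : ℕ} (hn : σ.length ≤ n) :
    ∃ τ ∈ TstarK K, σ <+: τ ∧ τ.length = n := by
  by_contra hcon
  push_neg at hcon
  set S : Set FinSeq := {τ | σ <+: τ ∧ τ.length = n} with hS
  have hnull : μC (⋃ τ ∈ S, (K ∩ cyl τ)) = 0 := by
    rw [measure_biUnion_null_iff (Set.to_countable S)]
    intro τ hτ
    by_contra h0
    have : τ ∈ TstarK K := pos_iff_ne_zero.mpr h0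
    exact (hcon τ this hτ.1) hτ.2
  have hsub : K ∩ cyl σ ⊆ ⋃ τ ∈ S, (K ∩ cyl τ) := by
    intro x hx
    refine Set.mem_biUnion (show res x n ∈ S from ?_) ⟨hx.1, mem_cyl_res n⟩
    constructor
    · have h1 : res x σ.length = σ := mem_cyl.mp hx.2
      rw [← h1]
      exact res_prefix x hn
    · exact res_length x n
  have := lt_of_lt_of_le hσ (measure_mono hsub)
  rw [hnull] at this
  exact lt_irrefl _ this

lemma TstarK_isTree (hK : 0 < μC K) : IsTree (TstarK K) := by
  refine ⟨⟨[], TstarK_nil hK⟩, fun σ τ h hτ => TstarK_prefix h hτ, ?_⟩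
  intro σ hσ n hn
  exact TstarK_ext hσ (le_of_lt hn)

lemma LimT_TstarK_subset (hKcl : IsClosed K) : LimT (TstarK K) ⊆ K := by
  intro x hx
  apply mem_of_closed hKcl
  intro n
  have hpos : 0 < μC (K ∩ cyl (res x n)) := hx n
  obtain ⟨z, hz⟩ := nonempty_of_measure_ne_zero (ne_of_gt hpos)
  exact ⟨z, hz.1, mem_cyl_res_iff.mp hz.2⟩

lemma measure_LimT_TstarK_cyl {σ : FinSeq} (hσ : σ ∈ TstarK K) :
    0 < μC (LimT (TstarK K) ∩ cyl σ) := by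
  set U : Set Cantor := ⋃ τ ∈ {τ : FinSeq | μC (K ∩ cyl τ) = 0}, (K ∩ cyl τ) with hU
  have hUnull : μC U = 0 := by
    rw [hU, measure_biUnion_null_iff (Set.to_countable _)]
    exact fun τ hτ => hτ
  have hsub : (K ∩ cyl σ) \ U ⊆ LimT (TstarK K) ∩ cyl σ := by
    rintro x ⟨⟨hxK, hxσ⟩, hxU⟩
    refine ⟨fun n => ?_, hxσ⟩
    show 0 < μC (K ∩ cyl (res x n))
    by_contra h0
    push_neg at h0
    have h0' : μC (K ∩ cyl (res x n)) = 0 := le_antisymm h0 (zero_le)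
    exact hxU (Set.mem_biUnion h0' ⟨hxK, mem_cyl_res n⟩)
  have h1 : μC (K ∩ cyl σ) ≤ μC ((K ∩ cyl σ) \ U) := by
    calc μC (K ∩ cyl σ) ≤ μC ((K ∩ cyl σ) ∩ U) + μC ((K ∩ cyl σ) \ U) :=
          measure_le_inter_add_diff _ _ _
      _ ≤ μC U + μC ((K ∩ cyl σ) \ U) :=
          add_le_add_left (measure_mono Set.inter_subset_right) _
      _ = μC ((K ∩ cyl σ) \ U) := by rw [hUnull, zero_add]
  exact lt_of_lt_of_le (lt_of_lt_of_le hσ h1) (measure_mono hsub)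

lemma LimT_through (S : Set FinSeq) (η : FinSeq) :
    LimT (through S η) = LimT S ∩ cyl η := by
  ext x
  constructor
  · intro hx
    refine ⟨fun n => (hx n).1, ?_⟩
    rcases (hx η.length).2 with h | h
    · rw [mem_cyl]
      exact h.eq_of_length (res_length x η.length)
    · rw [mem_cyl]
      exact (h.eq_of_length (res_length x η.length).symm).symm
  · rintro ⟨hx, hxη⟩ n
    refine ⟨hx n, ?_⟩
    rcases le_total n η.length with h | h
    · left
      rw [← mem_cyl.mp hxη, ← res_take x h]
      exact List.take_prefix _ _
    · right
      rw [← mem_cyl.mp hxη]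
      exact res_prefix x h

lemma claimA {T : Set FinSeq} {K : Set Cantor} (hK0 : 0 < μC K) (x : Cantor)
    (hfin : ∀ y ∈ LimT (TstarK K), y + x ∈ finEq (LimT T)) :
    ∃ τ ∈ TstarK K, ∃ ζ : FinSeq, ζ.length ≤ τ.length ∧
      ∀ y ∈ LimT (TstarK K) ∩ cyl τ, catShift ζ (y + x) ∈ LimT T := by
  by_contra hcon
  push_neg at hcon
  obtain ⟨f, hf⟩ := exists_surjective_nat FinSeq
  have hstepEx : ∀ p : FinSeq × ℕ, ∃ σ' : FinSeq, p.1 ∈ TstarK K →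
      (σ' ∈ TstarK K ∧ p.1 <+: σ' ∧ p.2 + 1 ≤ σ'.length ∧
        ∀ y' ∈ cyl σ', catShift (f p.2) (y' + x) ∉ LimT T) := by
    rintro ⟨σ, k⟩
    by_cases hσ : σ ∈ TstarK K
    · set ζ := f k with hζ
      set n1 := max (max ζ.length (σ.length + 1)) (k + 1) with hn1
      obtain ⟨τh, hτhT, hστh, hτhlen⟩ := TstarK_ext hσ (show σ.length ≤ n1 by omega)
      obtain ⟨y, hy, hybad⟩ := hcon τh hτhT ζ (by rw [hτhlen]; omega)
      have hex : ∃ m, res (catShift ζ (y + x)) m ∉ T := by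
        by_contra hall; push_neg at hall; exact hybad hall
      obtain ⟨m, hm⟩ := hex
      refine ⟨res y (max m n1), fun _ => ⟨?_, ?_, ?_, ?_⟩⟩
      · exact hy.1 (max m n1)
      · have h1 : res y n1 = τh := by rw [← hτhlen]; exact mem_cyl.mp hy.2
        exact hστh.trans (h1 ▸ res_prefix y (le_max_right m n1))
      · rw [res_length]; omega
      · intro y' hy' hmem
        have hagree : ∀ i < max m n1, y' i = y i := by
          intro i hi
          have := eq_of_res_eq (mem_cyl_res_iff.mp (show y' ∈ cyl (res y (max m n1)) from hy'))
          exact this i hi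
        have hres : res (catShift ζ (y' + x)) m = res (catShift ζ (y + x)) m := by
          apply res_eq_res
          intro i hi
          rcases lt_or_ge i ζ.length with h | h
          · rw [catShift_lt h, catShift_lt h]
          · rw [catShift_ge h, catShift_ge h]
            show y' i + x i = y i + x i
            rw [hagree i (lt_of_lt_of_le hi (le_max_left m n1))]
        have := hmem m
        rw [hres] at this
        exact hm this
    · exact ⟨σ, fun h => absurd h hσ⟩
  choose step hstep using hstepEx
  let g : ℕ → FinSeq := fun k => Nat.rec ([] : FinSeq) (fun k ih => step (ih, k)) k
  have hg0 : g 0 = [] := rfl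
  have hgs : ∀ k, g (k + 1) = step (g k, k) := fun k => rfl
  have hgT : ∀ k, g k ∈ TstarK K := by
    intro k
    induction k with
    | zero => exact TstarK_nil hK0
    | succ k ih => rw [hgs]; exact (hstep (g k, k) ih).1
  have hchain : ∀ k, g k <+: g (k + 1) := by
    intro k; rw [hgs]; exact (hstep (g k, k) (hgT k)).2.1
  have hlen : ∀ k, k ≤ (g k).length := by
    intro k
    cases k with
    | zero => simp [hg0]
    | succ k => rw [hgs]; exact (hstep (g k, k) (hgT k)).2.2.1
  have hbadk : ∀ k, ∀ y' ∈ cyl (g (k + 1)), catShift (f k) (y' + x) ∉ LimT T := by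
    intro k; rw [hgs]; exact (hstep (g k, k) (hgT k)).2.2.2
  have hmono : ∀ a b, a ≤ b → g a <+: g b := by
    intro a b hab
    induction b with
    | zero => rw [Nat.le_zero.mp hab]
    | succ b ih =>
        rcases eq_or_lt_of_le hab with h | h
        · rw [h]
        · exact (ih (Nat.lt_succ_iff.mp h)).trans (hchain b)
  set ystar : Cantor := fun i => (g (i + 1)).getD i 0 with hystar
  have hgetel : ∀ (k i : ℕ) (hik : i < (g k).length), ystar i = (g k)[i]'hik := by
    intro k i hik
    have hi1 : i < (g (i + 1)).length := lt_of_lt_of_le (Nat.lt_succ_self i) (hlen (i + 1))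
    have h1 : ystar i = (g (i + 1))[i]'hi1 := by
      rw [hystar]; exact List.getD_eq_getElem _ _ hi1
    rcases le_total (i + 1) k with h | h
    · have hpre := hmono _ _ h
      rw [h1]
      exact List.IsPrefix.getElem hpre hi1
    · have hpre := hmono _ _ h
      rw [h1]
      exact (List.IsPrefix.getElem hpre hik).symm
  have hpref : ∀ k, res ystar (g k).length = g k := by
    intro k
    apply List.ext_getElem (by rw [res_length])
    intro i h1 h2
    rw [res_getElem]
    exact hgetel k i h2
  have hystarT : ystar ∈ LimT (TstarK K) := by
    intro n
    have h1 : res ystar n = (g n).take n := by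
      rw [← res_take ystar (hlen n), hpref]
    rw [h1]
    exact TstarK_prefix (List.take_prefix _ _) (hgT n)
  have hbadall : ∀ ζ : FinSeq, catShift ζ (ystar + x) ∉ LimT T := by
    intro ζ
    obtain ⟨k, hk⟩ := hf ζ
    rw [← hk]
    exact hbadk k ystar (mem_cyl.mpr (hpref (k + 1)))
  obtain ⟨σ, hσ⟩ := mem_finEq_iff.mp (hfin ystar hystarT)
  exact hbadall σ hσ

lemma key3 : ∀ a b : ZMod 2, a + (b + a) = b := by decide


end Stmt5Aux

open Stmt5Aux ENNReal

/-- Lemma 9. -/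
theorem stmt5 (X : Set Cantor) (hX : NullAdditive X)
    (T : Set FinSeq) (hT : IsTree T) (hμ : 0 < μC (LimT T)) :
    ∃ Tstar : Set FinSeq, IsTree Tstar ∧ 0 < μC (LimT Tstar) ∧
      (∀ η ∈ Tstar, 0 < μC (LimT (through Tstar η))) ∧
      ((Set.univ \ finEq (LimT T)) + X) ∩ LimT Tstar = ∅ ∧
      X = ⋃ (η : FinSeq) (_ : η ∈ Tstar) (ζ : FinSeq) (_ : ζ.length = η.length),
            {x ∈ X | ∀ τ ∈ through Tstar η,
              finAdd (res (catShift ζ x) τ.length) τ ∈ T} := by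
  classical
  set E := LimT T with hE
  have hfull : μC (finEq E) = 1 := measure_finEq_LimT T hμ
  have hMnull : μC (Set.univ \ finEq E) = 0 := by
    rw [← Set.compl_eq_univ_diff]
    exact (prob_compl_eq_zero_iff (measurableSet_finEq_LimT T)).mpr hfull
  have hXM : μC (X + (Set.univ \ finEq E)) = 0 := hX _ hMnull
  obtain ⟨N, hsubN, hNm, hNnull⟩ := exists_measurable_superset_of_null hXM
  have hNc : μC Nᶜ = 1 := by
    rw [prob_compl_eq_one_iff hNm]
    exact hNnull
  obtain ⟨K, hKsub, hKcomp, hKlt⟩ :=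
    hNm.compl.exists_isCompact_lt_add (measure_ne_top μC Nᶜ)
      (show (1 : ℝ≥0∞) / 2 ≠ 0 by norm_num)
  have hK0 : 0 < μC K := by
    by_contra h0
    push_neg at h0
    have h00 : μC K = 0 := le_antisymm h0 (zero_le)
    rw [h00, zero_add, hNc] at hKlt
    norm_num at hKlt
  have hKcl : IsClosed K := hKcomp.isClosed
  set Tst := TstarK K with hTst
  have hLsub : LimT Tst ⊆ K := LimT_TstarK_subset hKcl
  have hLK : LimT Tst ⊆ Nᶜ := fun y hy => hKsub (hLsub hy)
  refine ⟨Tst, TstarK_isTree hK0, ?_, ?_, ?_, ?_⟩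
  · have := measure_LimT_TstarK_cyl (TstarK_nil hK0)
    rwa [cyl_nil, Set.inter_univ] at this
  · intro η hη
    rw [LimT_through]
    exact measure_LimT_TstarK_cyl hη
  · apply Set.eq_empty_iff_forall_notMem.mpr
    rintro y ⟨hy1, hy2⟩
    obtain ⟨m, hm, x', hx', hsum⟩ := Set.mem_add.mp hy1
    have hyN : y ∈ N := hsubN ⟨x', hx', m, hm, by rw [← hsum]; funext i; exact add_comm _ _⟩
    exact (hLK hy2) hyN
  · apply Set.eq_of_subset_of_subset
    · intro x hx
      have hfin : ∀ y ∈ LimT Tst, y + x ∈ finEq E := by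
        intro y hy
        by_contra hyx
        have hyN : y ∈ N := by
          apply hsubN
          exact ⟨x, hx, y + x, ⟨Set.mem_univ _, hyx⟩, by funext i; exact key3 (x i) (y i)⟩
        exact (hLK hy) hyN
      obtain ⟨τ, hτT, ζ, hζτ, hall⟩ := claimA hK0 x hfin
      set w : Cantor := fun i => if h : i < ζ.length
        then ζ.get ⟨i, h⟩ + catShift τ (fun _ => 0) i else x i with hw
      set zst : FinSeq := res w τ.length with hzst
      have hzstlen : zst.length = τ.length := res_length _ _
      have hzget : ∀ (i : ℕ) (h3 : i < zst.length), zst.get ⟨i, h3⟩ = w i := by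
        intro i h3
        rw [List.get_eq_getElem]
        exact res_getElem w τ.length i h3
      have hshift : ∀ y ∈ cyl τ, catShift zst x + y = catShift ζ (y + x) := by
        intro y hy
        funext i
        rcases lt_or_ge i ζ.length with h1 | h1
        · have h2 : i < τ.length := lt_of_lt_of_le h1 hζτ
          have h3 : i < zst.length := by rw [hzstlen]; exact h2
          show catShift zst x i + y i = _
          rw [catShift_lt h3, catShift_lt h1]
          have h4 : zst.get ⟨i, h3⟩ = ζ.get ⟨i, h1⟩ + τ.get ⟨i, h2⟩ := by
            rw [hzget i h3, hw]
            show (if h : i < ζ.length then _ else _) = _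
            rw [dif_pos h1, catShift_lt h2]
          rw [h4]
          have h5 : y i = τ.get ⟨i, h2⟩ := by
            have := mem_cyl_iff_forall.mp hy i h2
            simpa [List.get_eq_getElem] using this
          rw [h5, add_assoc, z2, add_zero]
        · rcases lt_or_ge i τ.length with h2 | h2
          · have h3 : i < zst.length := by rw [hzstlen]; exact h2
            show catShift zst x i + y i = _
            rw [catShift_lt h3, catShift_ge h1]
            have h4 : zst.get ⟨i, h3⟩ = x i := by
              rw [hzget i h3, hw]
              exact dif_neg (not_lt.mpr h1)
            rw [h4]
            exact add_comm _ _
          · have h3 : zst.length ≤ i := by rw [hzstlen]; exact h2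
            show catShift zst x i + y i = _
            rw [catShift_ge h3, catShift_ge h1]
            exact add_comm _ _
      refine Set.mem_iUnion.mpr ⟨τ, Set.mem_iUnion.mpr ⟨hτT,
        Set.mem_iUnion.mpr ⟨zst, Set.mem_iUnion.mpr ⟨hzstlen, hx, ?_⟩⟩⟩⟩
      intro τ' hτ'
      obtain ⟨hτ'T, hcomp⟩ := hτ'
      have hlong : ∃ σL, σL ∈ Tst ∧ τ <+: σL ∧ τ' <+: σL := by
        rcases hcomp with h | h
        · exact ⟨τ, hτT, List.prefix_rfl, h⟩
        · exact ⟨τ', hτ'T, h, List.prefix_rfl⟩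
      obtain ⟨σL, hσLT, hτσL, hτ'σL⟩ := hlong
      have hpos := measure_LimT_TstarK_cyl (K := K) hσLT
      obtain ⟨y, hy⟩ := nonempty_of_measure_ne_zero (ne_of_gt hpos)
      have hycylτ : y ∈ cyl τ := cyl_mono hτσL hy.2
      have hyE : catShift zst x + y ∈ E := by
        rw [hshift y hycylτ]
        exact hall y ⟨hy.1, hycylτ⟩
      have hres := hyE τ'.length
      rw [res_add] at hres
      have hyτ' : res y τ'.length = τ' := mem_cyl.mp (cyl_mono hτ'σL hy.2)
      rwa [hyτ'] at hres
    · intro x hx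
      simp only [Set.mem_iUnion] at hx
      obtain ⟨η, _, ζ, _, hxm, _⟩ := hx
      exact hxm
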